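/- For all natural numbers m ≥ 1 and S ≥ m-1 and real q ∈ (0,1], the difference p^m(S) - p^{m+1}(S) equals q * C(S, m-1) * q^(m-1) * (1-q)^(S-(m-1)) / m, where p^m(S) = q * Σ_{t=m-1}^{S} C(S,t) q^t (1-q)^{S-t} / (t+1); in particular p^m(S) ≥ p^{m+1}(S). -/
import Mathlib


theorem stmt_18 (m S : ℕ) (hm : 1 ≤ m) (hS : m - 1 ≤ S) (q : ℝ)
    (hq0 : 0 < q) (hq1 : q ≤ 1)
    (p : ℕ → ℕ → ℝ)
    (hp : ∀ m' S', p m' S' =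
      q * ∑ t ∈ Finset.Icc (m' - 1) S',
        (S'.choose t : ℝ) * q ^ t * (1 - q) ^ (S' - t) / (t + 1)) :
    p m S - p (m + 1) S
      = q * (S.choose (m - 1) : ℝ) * q ^ (m - 1) * (1 - q) ^ (S - (m - 1)) / m ∧
    p (m + 1) S ≤ p m S := by
  have hmm : m - 1 + 1 = m := Nat.succ_pred_eq_of_pos hm
  have hdiff : p m S - p (m + 1) S
      = q * (S.choose (m - 1) : ℝ) * q ^ (m - 1) * (1 - q) ^ (S - (m - 1)) / m := by
    rw [hp, hp]
    have h1 : m + 1 - 1 = m := rfl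
    rw [h1]
    have hins : Finset.Icc (m - 1) S = insert (m - 1) (Finset.Icc m S) := by
      ext x
      simp only [Finset.mem_Icc, Finset.mem_insert]
      omega
    rw [hins, Finset.sum_insert (by simp [Finset.mem_Icc]; omega)]
    have h2 : ((m - 1 : ℕ) : ℝ) + 1 = (m : ℝ) := by exact_mod_cast hmm
    rw [h2]
    ring
  refine ⟨hdiff, ?_⟩
  have hterm : 0 ≤ q * (S.choose (m - 1) : ℝ) * q ^ (m - 1) * (1 - q) ^ (S - (m - 1)) / m := by
    apply div_nonneg _ (by positivity)
    have h1q : (0:ℝ) ≤ 1 - q := by linarith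
    positivity
  linarith [hdiff]
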